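/- Let Λ > 0, let ρ̄, p̄ : (0,1] → ℝ be differentiable with ρ̄(1) > 0, suppose 0 ≤ p̄(τ) ≤ ρ̄(τ)/3, that ρ̄ satisfies the background Euler equation ∂_τ ρ̄(τ) = (3/τ)(ρ̄(τ) + p̄(τ)) on (0,1], and that ∂_τ p̄(τ) = c̄²(τ)·∂_τ ρ̄(τ) for some function c̄² with 0 ≤ c̄²(τ) ≤ 1/3 for all τ ∈ (0,1]. Define ψ(τ) := Λ + ρ̄(τ) − (3/4)(ρ̄(τ) + p̄(τ)). Then ψ is differentiable on (0,1] with ∂_τ ψ(τ) = (1/4)·∂_τ ρ̄(τ) − (3/4)·∂_τ p̄(τ), and 0 ≤ ∂_τ ψ(τ) ≤ τ²·ρ̄(1) for every τ ∈ (0,1]. -/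

import Mathlib

/-- The function `ψ(τ) = Λ + ρ̄ - (3/4)(ρ̄ + p̄)` is differentiable with
`∂_τ ψ = (1/4)∂_τ ρ̄ - (3/4)∂_τ p̄` and `0 ≤ ∂_τ ψ(τ) ≤ τ² ρ̄(1)` on `(0,1]`. -/
theorem background_psi_deriv_bounds (Λ : ℝ) (hΛ : 0 < Λ) (ρ p c2 : ℝ → ℝ)
    (hρ1 : 0 < ρ 1)
    (hpb : ∀ τ ∈ Set.Ioc (0:ℝ) 1, 0 ≤ p τ ∧ p τ ≤ ρ τ / 3)
    (heuler : ∀ τ ∈ Set.Ioc (0:ℝ) 1, HasDerivAt ρ ((3 / τ) * (ρ τ + p τ)) τ)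
    (hpd : ∀ τ ∈ Set.Ioc (0:ℝ) 1, HasDerivAt p (c2 τ * deriv ρ τ) τ)
    (hc2 : ∀ τ ∈ Set.Ioc (0:ℝ) 1, 0 ≤ c2 τ ∧ c2 τ ≤ 1/3) :
    ∀ τ ∈ Set.Ioc (0:ℝ) 1,
      HasDerivAt (fun t => Λ + ρ t - (3/4) * (ρ t + p t))
        ((1/4) * deriv ρ τ - (3/4) * deriv p τ) τ ∧
      0 ≤ (1/4) * deriv ρ τ - (3/4) * deriv p τ ∧
      (1/4) * deriv ρ τ - (3/4) * deriv p τ ≤ τ ^ 2 * ρ 1 := by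
  -- auxiliary function g t = ρ t / t^3
  set g : ℝ → ℝ := fun t => ρ t / t ^ 3 with hg
  have hgd : ∀ τ ∈ Set.Ioc (0:ℝ) 1, HasDerivAt g (3 * p τ / τ ^ 4) τ := by
    intro τ hτ
    have hτ0 : τ ≠ 0 := ne_of_gt hτ.1
    have h1 := (heuler τ hτ).div (hasDerivAt_pow 3 τ) (by positivity)
    refine h1.congr_deriv ?_
    field_simp
    ring
  have hmono : MonotoneOn g (Set.Ioc (0:ℝ) 1) := by
    apply monotoneOn_of_deriv_nonneg (convex_Ioc 0 1)
    · intro x hx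
      exact ((hgd x hx).continuousAt).continuousWithinAt
    · intro x hx
      rw [interior_Ioc] at hx
      exact ((hgd x ⟨hx.1, le_of_lt hx.2⟩).differentiableAt).differentiableWithinAt
    · intro x hx
      rw [interior_Ioc] at hx
      have hx' : x ∈ Set.Ioc (0:ℝ) 1 := ⟨hx.1, le_of_lt hx.2⟩
      rw [(hgd x hx').deriv]
      have := (hpb x hx').1
      positivity
  intro τ hτ
  have hτ0 : 0 < τ := hτ.1
  have hτ1 : τ ≤ 1 := hτ.2
  have hρle : ρ τ ≤ τ ^ 3 * ρ 1 := by
    have h := hmono hτ (Set.mem_Ioc.mpr ⟨one_pos, le_refl 1⟩) hτ1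
    simp only [hg, one_pow, div_one] at h
    calc ρ τ = (ρ τ / τ ^ 3) * τ ^ 3 := by field_simp
    _ ≤ ρ 1 * τ ^ 3 := by
        apply mul_le_mul_of_nonneg_right h (by positivity)
    _ = τ ^ 3 * ρ 1 := by ring
  have hp := hpb τ hτ
  have hρnn : 0 ≤ ρ τ := le_trans hp.1 (by linarith [hp.2])
  have hR := heuler τ hτ
  have hP := hpd τ hτ
  have hRd : deriv ρ τ = (3 / τ) * (ρ τ + p τ) := hR.deriv
  have hPd : deriv p τ = c2 τ * deriv ρ τ := hP.deriv
  have hc := hc2 τ hτ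
  have hRnn : 0 ≤ deriv ρ τ := by
    rw [hRd]; have := hp.1; positivity
  constructor
  · have h := ((hR.const_add Λ).sub ((hR.add hP).const_mul (3/4 : ℝ)))
    rw [← hRd, ← hPd] at h
    refine h.congr_deriv ?_
    ring
  constructor
  · rw [hPd]
    nlinarith [hc.1, hc.2, hRnn]
  · have h1 : (1/4 : ℝ) * deriv ρ τ - (3/4) * deriv p τ ≤ (1/4) * deriv ρ τ := by
      rw [hPd]; nlinarith [hc.1, hRnn]
    have h2 : (1/4 : ℝ) * deriv ρ τ ≤ τ ^ 2 * ρ 1 := by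
      rw [hRd, show (1:ℝ)/4 * (3/τ*(ρ τ + p τ)) = (3*(ρ τ + p τ)/4)/τ by ring,
        div_le_iff₀ hτ0]
      have : p τ ≤ ρ τ / 3 := hp.2
      nlinarith [hρle]
    linarith
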